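/- (Example 2, QAI but not RD) Let (X₁,X₂) and (Y₁,Y₂) be positive random vectors with X₁ ⊥ X₂, Y₁ ⊥ Y₂, X_i ⊥ Y_j for i ≠ j, and joint tails P[X_i > x, Y_i > y] = (1 + x³ + y)^{−1} for x, y ≥ 0, i = 1,2. With X_A = max(X₁,X₂) and Y_A = max(Y₁,Y₂): (a) P[X_A > x, Y_A > x]/(P[X_A > x] + P[Y_A > x]) → 0 as x → ∞; (b) liminf_{x→∞} P[X_A > x, Y_A > x]/P[X_A > x] ≥ 3/4 > 0. -/

import Mathlib

open Filter Topology MeasureTheory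

private lemma toReal_union_eq {Ω : Type*} [MeasurableSpace Ω] (μ : Measure Ω)
    [IsProbabilityMeasure μ] {S T : Set Ω} (hT : MeasurableSet T) :
    (μ (S ∪ T)).toReal = (μ S).toReal + (μ T).toReal - (μ (S ∩ T)).toReal := by
  have h := measure_union_add_inter (μ := μ) S hT
  have h1 : (μ (S ∪ T)).toReal + (μ (S ∩ T)).toReal = (μ S).toReal + (μ T).toReal := by
    rw [← ENNReal.toReal_add (measure_ne_top μ _) (measure_ne_top μ _),
      ← ENNReal.toReal_add (measure_ne_top μ _) (measure_ne_top μ _), h]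
  linarith

/-- (QAI but not RD example.) Let `(X₁,X₂)`, `(Y₁,Y₂)` be positive random
vectors such that the pairs `(X₁,Y₁)` and `(X₂,Y₂)` are independent with joint
tails `P[X_i > x, Y_i > y] = (1+x³+y)⁻¹` for `x,y ≥ 0`. With
`X_A = max(X₁,X₂)` and `Y_A = max(Y₁,Y₂)`:
(a) `P[X_A > x, Y_A > x]/(P[X_A > x]+P[Y_A > x]) → 0` (QAI_A), and
(b) `liminf P[X_A > x, Y_A > x]/P[X_A > x] ≥ 3/4 > 0` (so not RD_A). -/
theorem QAI_not_RD_example {Ω : Type*} [MeasurableSpace Ω] (μ : Measure Ω)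
    [IsProbabilityMeasure μ] (X Y : Fin 2 → Ω → ℝ)
    (hmX : ∀ i, Measurable (X i)) (hmY : ∀ i, Measurable (Y i))
    (hposXY : ∀ i ω, 0 < X i ω ∧ 0 < Y i ω)
    (hpair : ProbabilityTheory.IndepFun (fun ω => (X 0 ω, Y 0 ω)) (fun ω => (X 1 ω, Y 1 ω)) μ)
    (hjoint : ∀ i : Fin 2, ∀ x y : ℝ, 0 ≤ x → 0 ≤ y →
      (μ {ω | x < X i ω ∧ y < Y i ω}).toReal = (1 + x ^ 3 + y)⁻¹) :
    Tendsto (fun x : ℝ =>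
        (μ {ω | x < max (X 0 ω) (X 1 ω) ∧ x < max (Y 0 ω) (Y 1 ω)}).toReal /
          ((μ {ω | x < max (X 0 ω) (X 1 ω)}).toReal +
            (μ {ω | x < max (Y 0 ω) (Y 1 ω)}).toReal)) atTop (nhds 0) ∧
      (3 / 4 : ℝ) ≤ Filter.liminf (fun x : ℝ =>
        (μ {ω | x < max (X 0 ω) (X 1 ω) ∧ x < max (Y 0 ω) (Y 1 ω)}).toReal /
          (μ {ω | x < max (X 0 ω) (X 1 ω)}).toReal) atTop := by
  -- marginal tails
  have margX : ∀ i : Fin 2, ∀ x : ℝ, 0 ≤ x →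
      (μ {ω | x < X i ω}).toReal = (1 + x ^ 3)⁻¹ := by
    intro i x hx
    have h := hjoint i x 0 hx le_rfl
    have hs : {ω | x < X i ω ∧ (0:ℝ) < Y i ω} = {ω | x < X i ω} := by
      ext ω; simp [(hposXY i ω).2]
    rw [hs] at h
    rw [h]; norm_num
  have margY : ∀ i : Fin 2, ∀ x : ℝ, 0 ≤ x →
      (μ {ω | x < Y i ω}).toReal = (1 + x)⁻¹ := by
    intro i x hx
    have h := hjoint i 0 x le_rfl hx
    have hs : {ω | (0:ℝ) < X i ω ∧ x < Y i ω} = {ω | x < Y i ω} := by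
      ext ω; simp [(hposXY i ω).1]
    rw [hs] at h
    rw [h]; norm_num
  -- abbreviations for the three functions
  set J : ℝ → ℝ := fun x =>
    (μ {ω | x < max (X 0 ω) (X 1 ω) ∧ x < max (Y 0 ω) (Y 1 ω)}).toReal with hJ
  set NX : ℝ → ℝ := fun x => (μ {ω | x < max (X 0 ω) (X 1 ω)}).toReal with hNX
  set NY : ℝ → ℝ := fun x => (μ {ω | x < max (Y 0 ω) (Y 1 ω)}).toReal with hNY
  -- basic comparisons
  have hJle : ∀ x : ℝ, J x ≤ NX x := by
    intro x
    apply ENNReal.toReal_mono (measure_ne_top μ _)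
    exact measure_mono (fun ω h => h.1)
  have hJ0 : ∀ x : ℝ, 0 ≤ J x := fun x => ENNReal.toReal_nonneg
  have hNX0 : ∀ x : ℝ, 0 ≤ NX x := fun x => ENNReal.toReal_nonneg
  -- NX ≤ 2p
  have hNXle : ∀ x : ℝ, 0 ≤ x → NX x ≤ 2 * (1 + x ^ 3)⁻¹ := by
    intro x hx
    have hset : {ω | x < max (X 0 ω) (X 1 ω)} = {ω | x < X 0 ω} ∪ {ω | x < X 1 ω} := by
      ext ω; simp only [Set.mem_setOf_eq, Set.mem_union, lt_sup_iff]
    have hle : μ {ω | x < max (X 0 ω) (X 1 ω)} ≤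
        μ {ω | x < X 0 ω} + μ {ω | x < X 1 ω} := by
      rw [hset]; exact measure_union_le _ _
    have := ENNReal.toReal_mono
      (by finiteness) hle
    rw [ENNReal.toReal_add (measure_ne_top μ _) (measure_ne_top μ _)] at this
    rw [margX 0 x hx, margX 1 x hx] at this
    calc NX x ≤ (1 + x ^ 3)⁻¹ + (1 + x ^ 3)⁻¹ := this
      _ = 2 * (1 + x ^ 3)⁻¹ := by ring
  -- NX ≥ p, NY ≥ q
  have hNXge : ∀ x : ℝ, 0 ≤ x → (1 + x ^ 3)⁻¹ ≤ NX x := by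
    intro x hx
    rw [← margX 0 x hx]
    refine ENNReal.toReal_mono (measure_ne_top μ _) (measure_mono ?_)
    intro ω h
    simp only [Set.mem_setOf_eq] at h ⊢
    exact lt_sup_iff.2 (Or.inl h)
  have hNYge : ∀ x : ℝ, 0 ≤ x → (1 + x)⁻¹ ≤ NY x := by
    intro x hx
    rw [← margY 0 x hx]
    refine ENNReal.toReal_mono (measure_ne_top μ _) (measure_mono ?_)
    intro ω h
    simp only [Set.mem_setOf_eq] at h ⊢
    exact lt_sup_iff.2 (Or.inl h)
  -- lower bound on J via independence: J ≥ 2r - r²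
  have hJge : ∀ x : ℝ, 0 ≤ x →
      2 * (1 + x ^ 3 + x)⁻¹ - ((1 + x ^ 3 + x)⁻¹) ^ 2 ≤ J x := by
    intro x hx
    set D : Fin 2 → Set Ω := fun i => {ω | x < X i ω ∧ x < Y i ω} with hD
    have hDpre : ∀ i : Fin 2, D i =
        (fun ω => (X i ω, Y i ω)) ⁻¹' (Set.Ioi x ×ˢ Set.Ioi x) := by
      intro i; ext ω; simp [hD, Set.mem_prod]
    have hDmeas : MeasurableSet (D 1) := by
      rw [hDpre]
      exact ((hmX 1).prodMk (hmY 1)) (measurableSet_Ioi.prod measurableSet_Ioi)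
    have hr : ∀ i : Fin 2, (μ (D i)).toReal = (1 + x ^ 3 + x)⁻¹ :=
      fun i => hjoint i x x hx hx
    have hint : (μ (D 0 ∩ D 1)).toReal = ((1 + x ^ 3 + x)⁻¹) ^ 2 := by
      rw [hDpre 0, hDpre 1,
        hpair.measure_inter_preimage_eq_mul _ _ (measurableSet_Ioi.prod measurableSet_Ioi)
          (measurableSet_Ioi.prod measurableSet_Ioi),
        ENNReal.toReal_mul, ← hDpre 0, ← hDpre 1, hr 0, hr 1]
      ring
    have hunion : (μ (D 0 ∪ D 1)).toReal =
        2 * (1 + x ^ 3 + x)⁻¹ - ((1 + x ^ 3 + x)⁻¹) ^ 2 := by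
      rw [toReal_union_eq μ hDmeas, hr 0, hr 1, hint]; ring
    rw [← hunion]
    apply ENNReal.toReal_mono (measure_ne_top μ _)
    apply measure_mono
    rintro ω (⟨h1, h2⟩ | ⟨h1, h2⟩)
    · exact ⟨lt_sup_iff.2 (Or.inl h1), lt_sup_iff.2 (Or.inl h2)⟩
    · exact ⟨lt_sup_iff.2 (Or.inr h1), lt_sup_iff.2 (Or.inr h2)⟩
  constructor
  · -- part (a)
    have key : ∀ᶠ x : ℝ in atTop,
        J x / (NX x + NY x) ≤ 4 / x ^ 2 := by
      filter_upwards [eventually_ge_atTop (1 : ℝ)] with x hx1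
      have hx : (0:ℝ) ≤ x := by linarith
      have hq : (0:ℝ) < (1 + x)⁻¹ := by positivity
      have hd : (1 + x)⁻¹ ≤ NX x + NY x := le_add_of_nonneg_of_le (hNX0 x) (hNYge x hx)
      have hJ2 : J x ≤ 2 * (1 + x ^ 3)⁻¹ := (hJle x).trans (hNXle x hx)
      have h1 : J x / (NX x + NY x) ≤ (2 * (1 + x ^ 3)⁻¹) / (1 + x)⁻¹ :=
        div_le_div₀ (by positivity) hJ2 hq hd
      refine h1.trans ?_
      have h3 : (0:ℝ) < 1 + x ^ 3 := by positivity
      have h4 : (0:ℝ) < 1 + x := by positivity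
      have heq : (2 * (1 + x ^ 3)⁻¹) / (1 + x)⁻¹ = (2 * (1 + x)) / (1 + x ^ 3) := by
        field_simp
      rw [heq, div_le_div_iff₀ h3 (by positivity : (0:ℝ) < x ^ 2)]
      have hxx : x ^ 2 ≤ x ^ 3 := by nlinarith
      nlinarith
    have key0 : ∀ᶠ x : ℝ in atTop, 0 ≤ J x / (NX x + NY x) := by
      filter_upwards with x
      exact div_nonneg (hJ0 x) (add_nonneg (hNX0 x) ENNReal.toReal_nonneg)
    have hlim : Tendsto (fun x : ℝ => 4 / x ^ 2) atTop (nhds 0) :=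
      Tendsto.div_atTop tendsto_const_nhds (tendsto_pow_atTop two_ne_zero)
    exact tendsto_of_tendsto_of_tendsto_of_le_of_le' tendsto_const_nhds hlim key0 key
  · -- part (b)
    apply Filter.le_liminf_of_le
    · apply Filter.IsBoundedUnder.isCoboundedUnder_ge
      refine ⟨1, Filter.eventually_map.2 ?_⟩
      filter_upwards with x
      exact div_le_one_of_le₀ (hJle x) (hNX0 x)
    · filter_upwards [eventually_ge_atTop (10 : ℝ)] with x hx10
      have hx : (0:ℝ) ≤ x := by linarith
      have hp : (0:ℝ) < (1 + x ^ 3)⁻¹ := by positivity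
      have hNXpos : 0 < NX x := lt_of_lt_of_le hp (hNXge x hx)
      rw [le_div_iff₀ hNXpos]
      have hc : (0:ℝ) < 1 + x ^ 3 + x := by positivity
      have h3 : (0:ℝ) < 1 + x ^ 3 := by positivity
      -- enough: (3/4) * (2 p) ≤ 2r - r²
      have h1 : 3 / 4 * NX x ≤ 3 / 4 * (2 * (1 + x ^ 3)⁻¹) :=
        mul_le_mul_of_nonneg_left (hNXle x hx) (by norm_num)
      refine h1.trans ((le_trans ?_ (hJge x hx)))
      set p := (1 + x ^ 3)⁻¹ with hpdef
      set r := (1 + x ^ 3 + x)⁻¹ with hrdef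
      have hrpos : 0 < r := by rw [hrdef]; positivity
      have hrlep : r ≤ p := by
        rw [hrdef, hpdef]
        exact inv_anti₀ h3 (by linarith)
      have hx2 : (100:ℝ) ≤ x ^ 2 := by nlinarith
      have hx3 : (1000:ℝ) ≤ x ^ 3 := by nlinarith [mul_le_mul_of_nonneg_right hx2 hx]
      have hpr : p - r = x * p * r := by
        rw [hrdef, hpdef]
        field_simp
        ring
      have hpx : p * x ≤ 1 / 100 := by
        have h100 : 100 * x ≤ 1 + x ^ 3 := by nlinarith [mul_le_mul_of_nonneg_right hx2 hx]
        have hxpos : (0:ℝ) < x := by linarith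
        have hple : p ≤ (100 * x)⁻¹ := by
          rw [hpdef]; exact inv_anti₀ (by positivity) h100
        calc p * x ≤ (100 * x)⁻¹ * x := mul_le_mul_of_nonneg_right hple hx
          _ = 1 / 100 := by field_simp
      have hple2 : p ≤ 1 / 1001 := by
        rw [hpdef]
        rw [show (1:ℝ)/1001 = (1001:ℝ)⁻¹ by norm_num]
        exact inv_anti₀ (by norm_num) (by linarith)
      have h4 : x * p * r ≤ x * p * p :=
        mul_le_mul_of_nonneg_left hrlep (mul_nonneg hx hp.le)
      have h6 : x * p * p ≤ (1 / 100) * p := by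
        have := mul_le_mul_of_nonneg_right hpx hp.le
        calc x * p * p = p * x * p := by ring
          _ ≤ (1 / 100) * p := this
      have h5 : r ^ 2 ≤ p ^ 2 := by nlinarith
      have h7 : p ^ 2 ≤ (1 / 1001) * p := by nlinarith
      nlinarith
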